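/- The function x ↦ h⁻¹(x)·(1 − h⁻¹(x)) is convex on the interval [0,1]. -/

import Mathlib

open Finset Asymptotics Filter

/-- Binary entropy function (base-2 logarithms). -/
noncomputable def binEnt (p : ℝ) : ℝ :=
  -(p * Real.logb 2 p) - (1 - p) * Real.logb 2 (1 - p)

/-- Inverse of the binary entropy function restricted to `[0, 1/2]`. -/
noncomputable def binEntInv (x : ℝ) : ℝ :=
  sSup {p : ℝ | p ∈ Set.Icc (0:ℝ) (1/2) ∧ binEnt p ≤ x}

/-- `p*q = p(1-q) + q(1-p)`. -/
def pstar (p q : ℝ) : ℝ := p * (1 - q) + q * (1 - p)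

/-- Probability of the rectangle `A × B` for `ρ`-correlated uniform binary strings. -/
noncomputable def Pxy (n : ℕ) (ρ : ℝ) (A B : Finset (Fin n → Bool)) : ℝ :=
  ∑ a ∈ A, ∑ b ∈ B,
    (2:ℝ)⁻¹ ^ n * ((1 + ρ)/2) ^ n * ((1 - ρ)/(1 + ρ)) ^ (hammingDist a b)

/-- Hamming sphere of radius `j` around the all-zeros string in `{0,1}^n`. -/
def hSphere (n j : ℕ) : Finset (Fin n → Bool) :=
  Finset.univ.filter (fun x => (Finset.univ.filter (fun i => x i = true)).card = j)

/-- The exponent function `w_d(α,β)`. -/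
noncomputable def wd (α β d : ℝ) : ℝ :=
  α + binEntInv α * binEnt (1/2 + (binEntInv β - d)/(2 * binEntInv α))
    + (1 - binEntInv α) * binEnt (1/2 + (d - (1 - binEntInv β))/(2 * (1 - binEntInv α)))

/-- The noise operator `T_ρ`. -/
noncomputable def Tnoise (n : ℕ) (ρ : ℝ) (f : (Fin n → Bool) → ℝ) (y : Fin n → Bool) : ℝ :=
  ∑ x : Fin n → Bool,
    f x * ((1 + ρ)/2) ^ (n - hammingDist x y) * ((1 - ρ)/2) ^ (hammingDist x y)

/-- The normalized `p`-norm on functions on the hypercube. -/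
noncomputable def pNorm (n : ℕ) (p : ℝ) (f : (Fin n → Bool) → ℝ) : ℝ :=
  ((2:ℝ)⁻¹ ^ n * ∑ x : Fin n → Bool, |f x| ^ p) ^ (1/p)

/-- Indicator function of a set `A ⊆ {0,1}^n`. -/
def indA (n : ℕ) (A : Finset (Fin n → Bool)) : (Fin n → Bool) → ℝ :=
  fun x => if x ∈ A then 1 else 0

lemma log2_pos : (0:ℝ) < Real.log 2 := Real.log_pos (by norm_num)

lemma binEnt_eq (p : ℝ) : binEnt p = Real.binEntropy p / Real.log 2 := by
  simp [binEnt, Real.binEntropy, Real.logb, Real.log_inv]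
  ring

lemma binEnt_zero : binEnt 0 = 0 := by simp [binEnt]

lemma binEnt_half : binEnt (1/2) = 1 := by
  rw [binEnt_eq, show (1:ℝ)/2 = 2⁻¹ by norm_num, Real.binEntropy_two_inv]
  exact div_self (ne_of_gt log2_pos)

lemma binEnt_strictMonoOn : StrictMonoOn binEnt (Set.Icc 0 (1/2)) := by
  intro a ha b hb hab
  rw [binEnt_eq, binEnt_eq]
  have := Real.binEntropy_strictMonoOn (by simpa [one_div] using ha) (by simpa [one_div] using hb) hab
  exact div_lt_div_of_pos_right this log2_pos

lemma binEnt_continuous : Continuous binEnt := by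
  have : binEnt = fun p => Real.binEntropy p / Real.log 2 := funext binEnt_eq
  rw [this]
  exact Real.binEntropy_continuous.div_const _

lemma sSet_nonempty {x : ℝ} (hx : 0 ≤ x) :
    (0:ℝ) ∈ {p : ℝ | p ∈ Set.Icc (0:ℝ) (1/2) ∧ binEnt p ≤ x} := by
  refine ⟨⟨le_refl _, by norm_num⟩, ?_⟩
  rw [binEnt_zero]; exact hx

lemma sSet_bdd (x : ℝ) : BddAbove {p : ℝ | p ∈ Set.Icc (0:ℝ) (1/2) ∧ binEnt p ≤ x} :=
  ⟨1/2, fun p hp => hp.1.2⟩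

lemma binEntInv_mem {x : ℝ} (hx : 0 ≤ x) :
    binEntInv x ∈ {p : ℝ | p ∈ Set.Icc (0:ℝ) (1/2) ∧ binEnt p ≤ x} := by
  have hcl : IsClosed {p : ℝ | p ∈ Set.Icc (0:ℝ) (1/2) ∧ binEnt p ≤ x} := by
    have : {p : ℝ | p ∈ Set.Icc (0:ℝ) (1/2) ∧ binEnt p ≤ x}
        = Set.Icc (0:ℝ) (1/2) ∩ binEnt ⁻¹' (Set.Iic x) := by ext q; simp only [Set.mem_setOf_eq, Set.mem_inter_iff, Set.mem_preimage, Set.mem_Iic]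
    rw [this]
    exact isClosed_Icc.inter (isClosed_Iic.preimage binEnt_continuous)
  exact hcl.csSup_mem ⟨0, sSet_nonempty hx⟩ (sSet_bdd x)

lemma binEntInv_nonneg {x : ℝ} (hx : 0 ≤ x) : 0 ≤ binEntInv x := (binEntInv_mem hx).1.1

lemma binEntInv_le_half {x : ℝ} (hx : 0 ≤ x) : binEntInv x ≤ 1/2 := (binEntInv_mem hx).1.2

lemma binEnt_binEntInv {x : ℝ} (hx0 : 0 ≤ x) (hx1 : x ≤ 1) : binEnt (binEntInv x) = x := by
  obtain ⟨⟨hs0, hs2⟩, hsle⟩ := binEntInv_mem hx0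
  have hIVT : x ∈ Set.Icc (binEnt (binEntInv x)) (binEnt (1/2)) := by
    rw [binEnt_half]; exact ⟨hsle, hx1⟩
  obtain ⟨p, hp, hpe⟩ := intermediate_value_Icc hs2 binEnt_continuous.continuousOn hIVT
  have hple : p ≤ binEntInv x :=
    le_csSup (sSet_bdd x) ⟨⟨le_trans hs0 hp.1, hp.2⟩, le_of_eq hpe⟩
  have : p = binEntInv x := le_antisymm hple hp.1
  rw [← this]; exact hpe

lemma binEntInv_binEnt {p : ℝ} (hp : p ∈ Set.Icc (0:ℝ) (1/2)) : binEntInv (binEnt p) = p := by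
  apply IsGreatest.csSup_eq
  constructor
  · exact ⟨hp, le_refl _⟩
  · intro q hq
    by_contra h
    push_neg at h
    exact absurd (binEnt_strictMonoOn hp hq.1 h) (not_lt.mpr hq.2)

lemma binEntInv_mono : MonotoneOn binEntInv (Set.Icc 0 1) := by
  intro a ha b hb hab
  exact csSup_le_csSup (sSet_bdd b) ⟨0, sSet_nonempty ha.1⟩
    (fun p hp => ⟨hp.1, le_trans hp.2 hab⟩)

lemma binEntInv_strictMono : StrictMonoOn binEntInv (Set.Icc 0 1) := by
  intro a ha b hb hab
  have h := binEntInv_mono ha hb hab.le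
  rcases lt_or_eq_of_le h with h | h
  · exact h
  · exfalso
    have ha' := binEnt_binEntInv ha.1 ha.2
    have hb' := binEnt_binEntInv hb.1 hb.2
    rw [h, hb'] at ha'
    exact absurd ha' hab.ne'

lemma binEntInv_image : binEntInv '' Set.Icc 0 1 = Set.Icc 0 (1/2) := by
  apply Set.Subset.antisymm
  · rintro _ ⟨x, hx, rfl⟩
    exact ⟨binEntInv_nonneg hx.1, binEntInv_le_half hx.1⟩
  · intro p hp
    refine ⟨binEnt p, ⟨?_, ?_⟩, binEntInv_binEnt hp⟩
    · rw [binEnt_eq]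
      exact div_nonneg (Real.binEntropy_nonneg hp.1 (by linarith [hp.2])) log2_pos.le
    · rw [← binEnt_half]
      rcases eq_or_lt_of_le hp.2 with h | h
      · rw [h]
      · exact (binEnt_strictMonoOn hp (by norm_num) h).le

lemma binEntInv_zero : binEntInv 0 = 0 := by
  have := binEntInv_binEnt (p := 0) ⟨le_refl _, by norm_num⟩
  rwa [binEnt_zero] at this

lemma binEntInv_one : binEntInv 1 = 1/2 := by
  have := binEntInv_binEnt (p := 1/2) ⟨by norm_num, le_refl _⟩
  rwa [binEnt_half] at this

lemma binEntInv_pos {x : ℝ} (hx0 : 0 < x) (hx1 : x ≤ 1) : 0 < binEntInv x := by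
  rcases eq_or_lt_of_le (binEntInv_nonneg hx0.le) with h | h
  · exfalso
    have := binEnt_binEntInv hx0.le hx1
    rw [← h, binEnt_zero] at this
    exact absurd this.symm hx0.ne'
  · exact h

lemma binEntInv_lt_half {x : ℝ} (hx0 : 0 ≤ x) (hx1 : x < 1) : binEntInv x < 1/2 := by
  rcases lt_or_eq_of_le (binEntInv_le_half hx0) with h | h
  · exact h
  · exfalso
    have := binEnt_binEntInv hx0 hx1.le
    rw [h, binEnt_half] at this
    exact absurd this hx1.ne'

lemma binEntInv_continuousOn : ContinuousOn binEntInv (Set.Icc 0 1) := by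
  intro a ha
  rcases eq_or_lt_of_le ha.1 with h0 | h0
  · subst h0
    have h := binEntInv_strictMono.continuousWithinAt_right_of_image_mem_nhdsWithin
      (Icc_mem_nhdsGE_of_mem (by norm_num : (0:ℝ) ∈ Set.Ico 0 1)) ?_
    · exact h.mono Set.Icc_subset_Ici_self
    · rw [binEntInv_image, binEntInv_zero]
      exact Icc_mem_nhdsGE_of_mem (by norm_num)
  rcases eq_or_lt_of_le ha.2 with h1 | h1
  · subst h1
    have h := binEntInv_strictMono.continuousWithinAt_left_of_image_mem_nhdsWithin
      (Icc_mem_nhdsLE_of_mem (by norm_num : (1:ℝ) ∈ Set.Ioc 0 1)) ?_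
    · exact h.mono Set.Icc_subset_Iic_self
    · rw [binEntInv_image, binEntInv_one]
      exact Icc_mem_nhdsLE_of_mem (by norm_num)
  · apply ContinuousAt.continuousWithinAt
    apply binEntInv_strictMono.continuousAt_of_image_mem_nhds (Icc_mem_nhds h0 h1)
    rw [binEntInv_image]
    exact Icc_mem_nhds (binEntInv_pos h0 h1.le) (binEntInv_lt_half h0.le h1)

lemma hasDerivAt_binEnt {p : ℝ} (hp0 : p ≠ 0) (hp1 : p ≠ 1) :
    HasDerivAt binEnt ((Real.log (1 - p) - Real.log p) / Real.log 2) p := by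
  have h := Real.hasDerivAt_binEntropy hp0 hp1
  have he : binEnt = fun q => Real.binEntropy q / Real.log 2 := funext binEnt_eq
  rw [he]
  exact h.div_const _

lemma logdiff_pos {p : ℝ} (h0 : 0 < p) (h2 : p < 1/2) :
    0 < Real.log (1 - p) - Real.log p :=
  sub_pos.mpr (Real.log_lt_log h0 (by linarith))

lemma hasDerivAt_binEntInv {x : ℝ} (hx : x ∈ Set.Ioo (0:ℝ) 1) :
    HasDerivAt binEntInv
      ((Real.log (1 - binEntInv x) - Real.log (binEntInv x)) / Real.log 2)⁻¹ x := by
  have hp0 : 0 < binEntInv x := binEntInv_pos hx.1 hx.2.le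
  have hp2 : binEntInv x < 1/2 := binEntInv_lt_half hx.1.le hx.2
  apply HasDerivAt.of_local_left_inverse
  · exact (binEntInv_continuousOn x ⟨hx.1.le, hx.2.le⟩).continuousAt
      (Icc_mem_nhds hx.1 hx.2)
  · exact hasDerivAt_binEnt hp0.ne' (by linarith)
  · exact ne_of_gt (div_pos (logdiff_pos hp0 hp2) log2_pos)
  · filter_upwards [Ioo_mem_nhds hx.1 hx.2] with y hy
    exact binEnt_binEntInv hy.1.le hy.2.le

lemma key_ineq {p : ℝ} (h0 : 0 < p) (h2 : p < 1/2) :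
    2 * (Real.log (1 - p) - Real.log p) ≤ (1 - 2*p) / (p * (1 - p)) := by
  set t := (1 - p) / p with ht_def
  have ht : 1 < t := by rw [lt_div_iff₀ h0]; linarith
  have hlog : Real.log (1 - p) - Real.log p = Real.log t := by
    rw [ht_def, Real.log_div (by linarith) h0.ne']
  have hsinh : Real.log t ≤ Real.sinh (Real.log t) :=
    Real.self_le_sinh_iff.mpr (Real.log_nonneg ht.le)
  rw [Real.sinh_log (by positivity)] at hsinh
  have heq : t - t⁻¹ = (1 - 2*p) / (p * (1 - p)) := by
    rw [ht_def]
    have h1 : (1:ℝ) - p ≠ 0 := by linarith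
    field_simp
    ring
  rw [hlog]
  linarith [hsinh, heq.symm.le, heq.le]

noncomputable def psi (p : ℝ) : ℝ :=
  (1 - 2*p) * Real.log 2 / (Real.log (1 - p) - Real.log p)

lemma hasDerivAt_psi {p : ℝ} (h0 : 0 < p) (h2 : p < 1/2) :
    HasDerivAt psi
      (((-2) * Real.log 2 * (Real.log (1 - p) - Real.log p)
        - (1 - 2*p) * Real.log 2 * (-(1 - p)⁻¹ - p⁻¹))
        / (Real.log (1 - p) - Real.log p) ^ 2) p := by
  have h1 : (1:ℝ) - p ≠ 0 := by linarith
  have hu : HasDerivAt (fun q : ℝ => (1 - 2*q) * Real.log 2) ((-2) * Real.log 2) p := by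
    have : HasDerivAt (fun q : ℝ => 1 - 2*q) (-2) p := by
      simpa using ((hasDerivAt_id p).const_mul (2:ℝ)).const_sub (1:ℝ)
    exact this.mul_const _
  have hv : HasDerivAt (fun q : ℝ => Real.log (1 - q) - Real.log q) (-(1 - p)⁻¹ - p⁻¹) p := by
    have hl1 : HasDerivAt (fun q : ℝ => Real.log (1 - q)) (-(1 - p)⁻¹) p := by
      have hc : HasDerivAt (fun q : ℝ => 1 - q) (-1) p := by
        simpa using (hasDerivAt_id p).const_sub (1:ℝ)
      have := (Real.hasDerivAt_log h1).comp p hc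
      simpa [Function.comp_def] using this
    exact hl1.sub (Real.hasDerivAt_log h0.ne')
  exact hu.div hv (ne_of_gt (logdiff_pos h0 h2))

lemma psi_monotoneOn : MonotoneOn psi (Set.Ioo 0 (1/2)) := by
  apply monotoneOn_of_deriv_nonneg (convex_Ioo 0 (1/2))
  · exact fun p hp => ((hasDerivAt_psi hp.1 hp.2).continuousAt).continuousWithinAt
  · rw [interior_Ioo]
    exact fun p hp => ((hasDerivAt_psi hp.1 hp.2).differentiableAt).differentiableWithinAt
  · rw [interior_Ioo]
    intro p hp
    obtain ⟨h0, h2⟩ := hp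
    rw [(hasDerivAt_psi h0 h2).deriv]
    have h1 : (0:ℝ) < 1 - p := by linarith
    have key := key_ineq h0 h2
    have heq : (1 - 2*p) * ((1 - p)⁻¹ + p⁻¹) = (1 - 2*p) / (p * (1 - p)) := by
      rw [eq_div_iff (by positivity : p * (1 - p) ≠ 0)]
      field_simp
      ring_nf
    apply div_nonneg _ (sq_nonneg _)
    have : (-2) * Real.log 2 * (Real.log (1 - p) - Real.log p)
        - (1 - 2*p) * Real.log 2 * (-(1 - p)⁻¹ - p⁻¹)
        = Real.log 2 * ((1 - 2*p) * ((1 - p)⁻¹ + p⁻¹)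
            - 2 * (Real.log (1 - p) - Real.log p)) := by ring
    rw [this, heq]
    exact mul_nonneg log2_pos.le (by linarith)

lemma hasDerivAt_g {x : ℝ} (hx : x ∈ Set.Ioo (0:ℝ) 1) :
    HasDerivAt (fun x : ℝ => binEntInv x * (1 - binEntInv x)) (psi (binEntInv x)) x := by
  have hp0 : 0 < binEntInv x := binEntInv_pos hx.1 hx.2.le
  have hp2 : binEntInv x < 1/2 := binEntInv_lt_half hx.1.le hx.2
  have hu := hasDerivAt_binEntInv hx
  have h : HasDerivAt (fun x : ℝ => binEntInv x * (1 - binEntInv x)) _ x :=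
    hu.mul ((hasDerivAt_const x (1:ℝ)).sub hu)
  convert h using 1
  set u := binEntInv x
  set d := ((Real.log (1 - u) - Real.log u) / Real.log 2)⁻¹
  have hL : Real.log (1 - u) - Real.log u ≠ 0 := (logdiff_pos hp0 hp2).ne'
  have hd : d = Real.log 2 / (Real.log (1 - u) - Real.log u) := by
    show ((Real.log (1 - u) - Real.log u) / Real.log 2)⁻¹ = _
    rw [inv_div]
  rw [psi, hd]
  field_simp
  ring

/-- `x ↦ h⁻¹(x)(1 − h⁻¹(x))` is convex on `[0,1]`. -/
theorem stmt_12 :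
    ConvexOn ℝ (Set.Icc (0:ℝ) 1) (fun x : ℝ => binEntInv x * (1 - binEntInv x)) := by
  apply MonotoneOn.convexOn_of_deriv (convex_Icc 0 1)
  · exact binEntInv_continuousOn.mul (continuousOn_const.sub binEntInv_continuousOn)
  · rw [interior_Icc]
    exact fun x hx => (hasDerivAt_g hx).differentiableAt.differentiableWithinAt
  · rw [interior_Icc]
    intro a ha b hb hab
    rw [(hasDerivAt_g ha).deriv, (hasDerivAt_g hb).deriv]
    exact psi_monotoneOn ⟨binEntInv_pos ha.1 ha.2.le, binEntInv_lt_half ha.1.le ha.2⟩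
      ⟨binEntInv_pos hb.1 hb.2.le, binEntInv_lt_half hb.1.le hb.2⟩
      (binEntInv_mono ⟨ha.1.le, ha.2.le⟩ ⟨hb.1.le, hb.2.le⟩ hab)
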